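/- arXiv:1505.00352 — 2 statements merged into one kernel-verified Lean document; each statement's English description precedes it below -/
import Mathlib

section
/- For every integer n ≥ 1 and every integer k with 0 ≤ k ≤ n-1, the polynomial (1+x)^{n-k} divides the polynomial p_k(x) := ∑_{N=0}^{n} N^k · C(n,N) · x^N in ℤ[x]. -/
open Polynomial

lemma deriv_dvd_aux {m : ℕ} {p : ℤ[X]} (h : (1 + X : ℤ[X]) ^ (m + 1) ∣ p) :
    (1 + X : ℤ[X]) ^ m ∣ derivative p := by
  obtain ⟨q, rfl⟩ := h
  rw [derivative_mul, derivative_pow]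
  refine ⟨C ((m : ℤ) + 1) * q * derivative (1 + X) + (1 + X) * derivative q, ?_⟩
  push_cast
  ring

theorem stmt_1 (n k : ℕ) (hn : 1 ≤ n) (hk : k ≤ n - 1) :
    ((1 + X : ℤ[X]) ^ (n - k)) ∣
      ∑ N ∈ Finset.range (n + 1), C ((N : ℤ) ^ k * (n.choose N : ℤ)) * X ^ N := by
  clear hn hk
  induction k with
  | zero =>
    have h : ∑ N ∈ Finset.range (n + 1), C ((N : ℤ) ^ 0 * (n.choose N : ℤ)) * X ^ N
        = (1 + X : ℤ[X]) ^ n := by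
      rw [add_comm (1 : ℤ[X]) X, add_pow]
      refine Finset.sum_congr rfl fun N _ => ?_
      simp [mul_comm]
    rw [h, Nat.sub_zero]
  | succ k ih =>
    have hS : (∑ N ∈ Finset.range (n + 1), C ((N : ℤ) ^ (k + 1) * (n.choose N : ℤ)) * X ^ N)
        = X * derivative (∑ N ∈ Finset.range (n + 1), C ((N : ℤ) ^ k * (n.choose N : ℤ)) * X ^ N) := by
      rw [derivative_sum, Finset.mul_sum]
      refine Finset.sum_congr rfl fun N _ => ?_
      rw [derivative_C_mul, derivative_X_pow]
      cases N with
      | zero => simp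
      | succ m =>
        have hc : ((m + 1 : ℕ) : ℤ) ^ (k + 1) * (n.choose (m + 1) : ℤ)
            = ((m + 1 : ℕ) : ℤ) ^ k * (n.choose (m + 1) : ℤ) * ((m + 1 : ℕ) : ℤ) := by
          ring
        rw [hc, C_mul, C_mul]
        push_cast
        ring
    rw [hS]
    rcases h : n - k with _ | m
    · have : n - (k + 1) = 0 := by omega
      rw [this]; exact one_dvd _
    · have : n - (k + 1) = m := by omega
      rw [this]
      exact Dvd.dvd.mul_left (deriv_dvd_aux (h ▸ ih)) X
end

section
/- Let v_1, ..., v_k ∈ ℤ^n be linearly independent, and suppose there is a coordinate j such that v_1 has j-th coordinate ±1 and v_2, ..., v_k all have j-th coordinate 0. Then the number of lattice points in the half-open parallelepiped spanned by v_1, ..., v_k equals the number of lattice points in the half-open parallelepiped spanned by v_2, ..., v_k. -/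
/-- The number of lattice points in the half-open parallelepiped
`{∑ t_i v_i : t_i ∈ [0,1)}` spanned by the integer vectors `v 0, …, v (k-1)`. -/
noncomputable def latticeCount (n k : ℕ) (v : Fin k → Fin n → ℤ) : ℕ :=
  Nat.card {x : Fin n → ℤ //
    ∃ t : Fin k → ℝ, (∀ i, 0 ≤ t i ∧ t i < 1) ∧ ∀ j, (x j : ℝ) = ∑ i, t i * (v i j : ℝ)}

theorem stmt_17 (n k : ℕ) (v : Fin (k + 1) → Fin n → ℤ)
    (hv : LinearIndependent ℚ fun i => fun j => ((v i j : ℚ)))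
    (j : Fin n) (h1 : v 0 j = 1 ∨ v 0 j = -1)
    (h0 : ∀ i : Fin k, v i.succ j = 0) :
    latticeCount n (k + 1) v = latticeCount n k (fun i => v i.succ) := by
  unfold latticeCount
  apply Nat.card_congr
  apply Equiv.subtypeEquivRight
  intro x
  constructor
  · rintro ⟨t, ht, hx⟩
    have hj := hx j
    rw [Fin.sum_univ_succ] at hj
    have hsum0 : ∑ i : Fin k, t i.succ * (v i.succ j : ℝ) = 0 := by
      apply Finset.sum_eq_zero
      intro i _
      rw [h0 i]; simp
    rw [hsum0, add_zero] at hj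
    have ht0 : t 0 = 0 := by
      obtain ⟨m, hm⟩ : ∃ m : ℤ, (m : ℝ) = t 0 := by
        rcases h1 with h | h
        · exact ⟨x j, by rw [hj, h]; push_cast; ring⟩
        · exact ⟨-x j, by rw [h] at hj; push_cast at hj ⊢; linarith⟩
      have hb := ht 0
      have h0m : (0:ℤ) ≤ m := by exact_mod_cast hm ▸ hb.1
      have h1m : m < 1 := by exact_mod_cast hm.symm ▸ hb.2
      have : m = 0 := le_antisymm (by omega) h0m
      rw [← hm, this]; simp
    refine ⟨fun i => t i.succ, fun i => ht i.succ, fun j' => ?_⟩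
    have := hx j'
    rw [Fin.sum_univ_succ, ht0, zero_mul, zero_add] at this
    exact this
  · rintro ⟨t, ht, hx⟩
    refine ⟨Fin.cases 0 t, ?_, fun j' => ?_⟩
    · intro i
      refine Fin.cases ?_ (fun i => ?_) i
      · simp
      · simpa using ht i
    · rw [Fin.sum_univ_succ]
      simpa using hx j'
end
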